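/- Let H be a separable complex Hilbert space, C a conjugation on H, and T a bounded linear operator on H that is both C-normal and normal (T*T = TT*). Then C maps (ker T)ᗮ into itself, the restriction C₂ of C to (ker T)ᗮ is a conjugation on (ker T)ᗮ, and the restriction of T to (ker T)ᗮ (well-defined since ker T reduces T) is C₂-normal. -/

import Mathlib

open scoped InnerProductSpace
open ContinuousLinearMap TopologicalSpace

/-- A conjugation on a complex Hilbert space: an anti-linear, involutive map
satisfying `⟪C x, C y⟫ = ⟪y, x⟫`. -/
def Conjugation {K : Type*} [NormedAddCommGroup K] [InnerProductSpace ℂ K] (C : K → K) : Prop :=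
  (∀ (a : ℂ) (x y : K), C (a • x + y) = (starRingEnd ℂ) a • C x + C y) ∧
  (∀ x, C (C x) = x) ∧
  (∀ x y : K, ⟪C x, C y⟫_ℂ = ⟪y, x⟫_ℂ)

/-- `T` is `C`-normal: `C T*T C = T T*` (pointwise). -/
def CNormal {K : Type*} [NormedAddCommGroup K] [InnerProductSpace ℂ K] [CompleteSpace K]
    (C : K → K) (T : K →L[ℂ] K) : Prop :=
  ∀ x, C (adjoint T (T (C x))) = T (adjoint T x)

/-- If `T` is `C`-normal and normal, then `C` maps `(ker T)ᗮ` into itself, the restriction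
`C₂` of `C` to `(ker T)ᗮ` is a conjugation, and the restriction of `T` to `(ker T)ᗮ`
is `C₂`-normal. -/
theorem stmt_7 {H : Type*} [NormedAddCommGroup H] [InnerProductSpace ℂ H] [CompleteSpace H]
    [SeparableSpace H]
    (C : H → H) (hC : Conjugation C)
    (T : H →L[ℂ] H) (hT : CNormal C T)
    (hnormal : adjoint T * T = T * adjoint T) :
    (∀ x ∈ (LinearMap.ker (T : H →ₗ[ℂ] H))ᗮ, C x ∈ (LinearMap.ker (T : H →ₗ[ℂ] H))ᗮ) ∧
    ∀ C₂ : ↥(LinearMap.ker (T : H →ₗ[ℂ] H))ᗮ → ↥(LinearMap.ker (T : H →ₗ[ℂ] H))ᗮ,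
      (∀ x : ↥(LinearMap.ker (T : H →ₗ[ℂ] H))ᗮ, (C₂ x : H) = C x) →
      (Conjugation C₂ ∧
        ∀ T' : ↥(LinearMap.ker (T : H →ₗ[ℂ] H))ᗮ →L[ℂ] ↥(LinearMap.ker (T : H →ₗ[ℂ] H))ᗮ,
          (∀ x : ↥(LinearMap.ker (T : H →ₗ[ℂ] H))ᗮ, (T' x : H) = T x) → CNormal C₂ T') := by
  obtain ⟨hadd, hinv, hip⟩ := hC
  -- C 0 = 0
  have hC0 : C 0 = 0 := by
    have h := hadd 1 0 0
    simp only [smul_zero, add_zero, map_one, one_smul] at h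
    exact left_eq_add.mp h
  -- ker T ⊆ ker (adjoint T)
  have hkerstar : ∀ v : H, T v = 0 → adjoint T v = 0 := by
    intro v hv
    have h2 : T (adjoint T v) = 0 := by
      have h0 : (adjoint T * T) v = 0 := by
        simp [ContinuousLinearMap.mul_apply, hv]
      rw [hnormal] at h0
      simpa [ContinuousLinearMap.mul_apply] using h0
    have h1 : ⟪adjoint T v, adjoint T v⟫_ℂ = 0 := by
      rw [adjoint_inner_left, h2, inner_zero_right]
    exact inner_self_eq_zero.mp h1
  -- C maps ker T into ker T
  have hCker : ∀ v : H, T v = 0 → T (C v) = 0 := by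
    intro v hv
    have h1 : C (adjoint T (T (C v))) = 0 := by
      rw [hT v, hkerstar v hv, map_zero]
    have h2 : adjoint T (T (C v)) = 0 := by
      have := congrArg C h1
      rwa [hinv, hC0] at this
    have h3 : ⟪T (C v), T (C v)⟫_ℂ = 0 := by
      rw [← adjoint_inner_right, h2, inner_zero_right]
    exact inner_self_eq_zero.mp h3
  have part1 : ∀ x ∈ (LinearMap.ker (T : H →ₗ[ℂ] H))ᗮ, C x ∈ (LinearMap.ker (T : H →ₗ[ℂ] H))ᗮ := by
    intro x hx
    intro u hu
    have hu' : T u = 0 := hu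
    have hCu : C u ∈ LinearMap.ker (T : H →ₗ[ℂ] H) := hCker u hu'
    have : ⟪C x, u⟫_ℂ = ⟪C u, x⟫_ℂ := by
      conv_lhs => rw [← hinv u]
      exact hip x (C u)
    rw [← inner_conj_symm, this, hx (C u) hCu, map_zero]
  refine ⟨part1, ?_⟩
  intro C₂ hC₂
  have hcoe : ∀ x : ↥(LinearMap.ker (T : H →ₗ[ℂ] H))ᗮ, (C₂ x : H) = C (x : H) := hC₂
  constructor
  · refine ⟨?_, ?_, ?_⟩
    · intro a x y
      apply Subtype.ext
      rw [hcoe]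
      push_cast
      rw [hcoe, hcoe, hadd]
    · intro x
      apply Subtype.ext
      rw [hcoe, hcoe, hinv]
    · intro x y
      simp only [Submodule.coe_inner, hcoe]
      exact hip _ _
  · intro T' hT'
    -- adjoint T maps (ker T)ᗮ to itself
    have hadjmem : ∀ y : ↥(LinearMap.ker (T : H →ₗ[ℂ] H))ᗮ, adjoint T (y : H) ∈ (LinearMap.ker (T : H →ₗ[ℂ] H))ᗮ := by
      intro y u hu
      have hu' : T u = 0 := hu
      rw [adjoint_inner_right, hu', inner_zero_left]
    have hadj : ∀ y : ↥(LinearMap.ker (T : H →ₗ[ℂ] H))ᗮ, ((adjoint T' y : H)) = adjoint T (y : H) := by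
      intro y
      have : adjoint T' y = ⟨adjoint T (y : H), hadjmem y⟩ := by
        apply ext_inner_left ℂ
        intro v
        rw [adjoint_inner_right]
        simp only [Submodule.coe_inner, hT']
        exact (adjoint_inner_right T (v : H) (y : H)).symm
      rw [this]
    intro x
    apply Subtype.ext
    rw [hcoe, hadj, hT', hcoe, hT', hadj]
    exact hT (x : H)
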